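/- Let 0 ≤ r < 1 and let λ ∈ ℂ with |λ| = 1. If |λ + 1| > 2r, then sup_{θ∈ℝ} |1 − λ·(1 − r·e^{iθ})/(1 − r·e^{−iθ})| = |(1 − 2r² − 2i·r·√(1−r²)) − (Re λ + i·|Im λ|)|. -/

import Mathlib

open Complex

set_option maxHeartbeats 1000000

noncomputable section

lemma my_arccos_antitone : Antitone Real.arccos := by
  intro x y h
  rw [Real.arccos_eq_pi_div_two_sub_arcsin, Real.arccos_eq_pi_div_two_sub_arcsin]
  linarith [Real.monotone_arcsin h]

lemma my_key_real (a b u v p q : ℝ) (ha : a^2 + b^2 = 1) (hu : u^2 + v^2 = 1)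
    (hp : p^2 + q^2 = 1) (hb : 0 ≤ b) (hq : 0 ≤ q) (hv : 0 ≤ v)
    (hup : p ≤ u) (hap : -p ≤ a) : a*p - b*q ≤ a*u - b*v := by
  have ha1 : -1 ≤ a := by nlinarith
  have ha2 : a ≤ 1 := by nlinarith
  have hu1 : -1 ≤ u := by nlinarith
  have hu2 : u ≤ 1 := by nlinarith
  have hp1 : -1 ≤ p := by nlinarith
  have hp2 : p ≤ 1 := by nlinarith
  have hb' : b = Real.sin (Real.arccos a) := by
    rw [Real.sin_arccos, show 1 - a^2 = b^2 by linarith, Real.sqrt_sq hb]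
  have hv' : v = Real.sin (Real.arccos u) := by
    rw [Real.sin_arccos, show 1 - u^2 = v^2 by linarith, Real.sqrt_sq hv]
  have hq' : q = Real.sin (Real.arccos p) := by
    rw [Real.sin_arccos, show 1 - p^2 = q^2 by linarith, Real.sqrt_sq hq]
  have ha' : a = Real.cos (Real.arccos a) := (Real.cos_arccos ha1 ha2).symm
  have hu' : u = Real.cos (Real.arccos u) := (Real.cos_arccos hu1 hu2).symm
  have hp' : p = Real.cos (Real.arccos p) := (Real.cos_arccos hp1 hp2).symm
  have h1 : Real.arccos u ≤ Real.arccos p := my_arccos_antitone hup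
  have h2 : Real.arccos a + Real.arccos p ≤ Real.pi := by
    have h3 : Real.arccos a ≤ Real.arccos (-p) := my_arccos_antitone (by linarith)
    rw [Real.arccos_neg] at h3; linarith
  calc a*p - b*q = Real.cos (Real.arccos a + Real.arccos p) := by
        rw [Real.cos_add, ← ha', ← hp', ← hb', ← hq']
    _ ≤ Real.cos (Real.arccos a + Real.arccos u) := by
        apply Real.cos_le_cos_of_nonneg_of_le_pi
        · have := Real.arccos_nonneg a; have := Real.arccos_nonneg u; linarith
        · exact h2
        · linarith
    _ = a*u - b*v := by rw [Real.cos_add, ← ha', ← hu', ← hb', ← hv']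

lemma my_wne (r : ℝ) (hr0 : 0 ≤ r) (hr1 : r < 1) (θ : ℝ) :
    (1 - (r : ℂ) * Complex.exp (Complex.I * θ)) ≠ 0 := by
  intro h
  have h2 : (r : ℂ) * Complex.exp (Complex.I * θ) = 1 := (sub_eq_zero.mp h).symm
  have h3 : ‖(r : ℂ) * Complex.exp (Complex.I * θ)‖ = ‖(1:ℂ)‖ := by rw [h2]
  rw [norm_mul, Complex.norm_exp, norm_one, Complex.norm_real] at h3
  simp [Real.norm_eq_abs, _root_.abs_of_nonneg hr0] at h3
  linarith

lemma my_hconj (r θ : ℝ) :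
    (1 - (r : ℂ) * Complex.exp (-(Complex.I * θ))) =
      (starRingEnd ℂ) (1 - (r : ℂ) * Complex.exp (Complex.I * θ)) := by
  rw [map_sub, map_mul, map_one, ← Complex.exp_conj]
  simp [map_mul, Complex.conj_I, Complex.conj_ofReal]

lemma my_bound_aux (r : ℝ) (hr0 : 0 ≤ r) (hr1 : r < 1)
    (l : ℂ) (hl : ‖l‖ = 1) (hcond : ‖l + 1‖ > 2 * r) (θ : ℝ) :
    ‖1 - l * ((1 - (r : ℂ) * Complex.exp (Complex.I * θ))
            / (1 - (r : ℂ) * Complex.exp (-(Complex.I * θ))))‖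
      ≤ ‖(1 - 2 * (r : ℂ) ^ 2 - 2 * Complex.I * (r : ℂ) * (Real.sqrt (1 - r ^ 2) : ℂ))
            - ((l.re : ℂ) + Complex.I * ((|l.im| : ℝ) : ℂ))‖ := by
  have hr2 : (0:ℝ) ≤ 1 - r^2 := by nlinarith
  set s : ℝ := Real.sqrt (1 - r^2) with hs_def
  have hs0 : 0 ≤ s := Real.sqrt_nonneg _
  have hs2 : s^2 = 1 - r^2 := Real.sq_sqrt hr2
  have hab : l.re^2 + l.im^2 = 1 := by
    have h := Complex.sq_norm l
    rw [hl, Complex.normSq_apply] at h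
    nlinarith
  set a := l.re
  set b := l.im
  set p : ℝ := 1 - 2*r^2 with hp_def
  set q : ℝ := 2*r*s with hq_def
  have hq0 : 0 ≤ q := by positivity
  have hpq : p^2 + q^2 = 1 := by rw [hp_def, hq_def]; nlinarith [hs2]
  have hap : -p ≤ a := by
    have h2 : (‖l+1‖)^2 > (2*r)^2 := by
      have := norm_nonneg (l+1); nlinarith
    rw [Complex.sq_norm, Complex.normSq_apply] at h2
    simp only [Complex.add_re, Complex.add_im, Complex.one_re, Complex.one_im] at h2
    rw [hp_def]; nlinarith
  -- rewrite denominator as conj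
  rw [my_hconj r θ]
  set w : ℂ := 1 - (r : ℂ) * Complex.exp (Complex.I * θ) with hw_def
  have hw : w ≠ 0 := my_wne r hr0 hr1 θ
  have hns : 0 < Complex.normSq w := Complex.normSq_pos.mpr hw
  set m : ℂ := w / (starRingEnd ℂ) w with hm_def
  -- facts about m
  have hnm : Complex.normSq m = 1 := by
    rw [hm_def, Complex.normSq_div, Complex.normSq_conj, div_self (ne_of_gt hns)]
  have hm1 : m.re^2 + m.im^2 = 1 := by
    have h := hnm
    rw [Complex.normSq_apply] at h
    nlinarith [h]
  have hmre : p ≤ m.re := by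
    have hwre : w.re = 1 - r * Real.cos θ := by
      rw [hw_def, mul_comm Complex.I]; simp [Complex.exp_ofReal_mul_I_re]
    have hwim : w.im = -(r * Real.sin θ) := by
      rw [hw_def, mul_comm Complex.I]; simp [Complex.exp_ofReal_mul_I_im]
    have hre : m.re = (w.re^2 - w.im^2) / Complex.normSq w := by
      rw [hm_def, Complex.div_re, Complex.normSq_conj, Complex.conj_re, Complex.conj_im]
      ring
    rw [hre, le_div_iff₀ hns, Complex.normSq_apply, hwre, hwim, hp_def]
    have hsc := Real.sin_sq_add_cos_sq θ
    have key : (1 - 2*r^2) * ((1 - r*Real.cos θ)*(1 - r*Real.cos θ) + -(r*Real.sin θ) * -(r*Real.sin θ))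
        = (1 - r*Real.cos θ)^2 - (-(r*Real.sin θ))^2 - 2*r^2*(Real.cos θ - r)^2 := by
      linear_combination (2*r^2*(1-r^2)) * hsc
    nlinarith [key, mul_nonneg (sq_nonneg r) (sq_nonneg (Real.cos θ - r))]
  -- squares
  have hnl : Complex.normSq l = 1 := by rw [Complex.normSq_eq_norm_sq, hl]; norm_num
  have hF2 : (‖1 - l * m‖)^2 = 2 - 2*(a * m.re - b * m.im) := by
    rw [Complex.sq_norm, Complex.normSq_sub, Complex.normSq_one, Complex.normSq_mul, hnl, hnm]
    simp only [one_mul, Complex.conj_re, Complex.mul_re]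
    ring
  have hM2 : (‖(1 - 2 * (r : ℂ) ^ 2 - 2 * Complex.I * (r : ℂ) * (s : ℂ))
            - ((a : ℂ) + Complex.I * ((|b| : ℝ) : ℂ))‖)^2 = 2 - 2*(a * p - |b| * q) := by
    rw [Complex.sq_norm, Complex.normSq_apply]
    simp [Complex.mul_re, Complex.mul_im, ← Complex.ofReal_pow]
    rw [hp_def, hq_def]
    nlinarith [hab, hs2, _root_.sq_abs b]
  -- key inequality
  have hkey : a * p - |b| * q ≤ a * m.re - b * m.im := by
    have h1 : a * p - |b| * q ≤ a * m.re - |b| * |m.im| := by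
      exact my_key_real a |b| m.re |m.im| p q (by rw [_root_.sq_abs]; exact hab)
        (by rw [_root_.sq_abs]; exact hm1) hpq (abs_nonneg b) hq0 (abs_nonneg _) hmre hap
    have h2 : b * m.im ≤ |b| * |m.im| := by
      calc b * m.im ≤ |b * m.im| := le_abs_self _
        _ = |b| * |m.im| := abs_mul _ _
    linarith
  have h0 : 0 ≤ ‖1 - l * m‖ := norm_nonneg _
  have h0' : 0 ≤ ‖(1 - 2 * (r : ℂ) ^ 2 - 2 * Complex.I * (r : ℂ) * (s : ℂ))
            - ((a : ℂ) + Complex.I * ((|b| : ℝ) : ℂ))‖ := norm_nonneg _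
  nlinarith [hF2, hM2, hkey, h0, h0']

lemma my_ach_aux (r : ℝ) (hr0 : 0 ≤ r) (hr1 : r < 1)
    (l : ℂ) :
    ∃ θ : ℝ, ‖1 - l * ((1 - (r : ℂ) * Complex.exp (Complex.I * θ))
            / (1 - (r : ℂ) * Complex.exp (-(Complex.I * θ))))‖
      = ‖(1 - 2 * (r : ℂ) ^ 2 - 2 * Complex.I * (r : ℂ) * (Real.sqrt (1 - r ^ 2) : ℂ))
            - ((l.re : ℂ) + Complex.I * ((|l.im| : ℝ) : ℂ))‖ := by
  have hr2 : (0:ℝ) ≤ 1 - r^2 := by nlinarith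
  set s : ℝ := Real.sqrt (1 - r^2) with hs_def
  have hs0 : 0 ≤ s := Real.sqrt_nonneg _
  have hs2 : s^2 = 1 - r^2 := Real.sq_sqrt hr2
  have hs2c : (s:ℂ)^2 = 1 - (r:ℂ)^2 := by norm_cast
  set p : ℝ := 1 - 2*r^2 with hp_def
  set q : ℝ := 2*r*s with hq_def
  have hpq : p^2 + q^2 = 1 := by rw [hp_def, hq_def]; nlinarith [hs2]
  have hpqc : (p:ℂ)^2 + (q:ℂ)^2 = 1 := by norm_cast
  have hcexpr : (1 - 2 * (r : ℂ) ^ 2 - 2 * Complex.I * (r : ℂ) * (s : ℂ)) = (p:ℂ) - (q:ℂ)*I := by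
    rw [hp_def, hq_def]; push_cast; ring
  have habsC : ‖(p:ℂ) + (q:ℂ)*I‖ = 1 := by
    have hsq : (‖(p:ℂ) + (q:ℂ)*I‖)^2 = 1 := by
      rw [Complex.sq_norm, Complex.normSq_apply]; simp; nlinarith [hpq]
    have hnn := norm_nonneg ((p:ℂ) + (q:ℂ)*I)
    rcases mul_eq_zero.mp (show (‖(p:ℂ) + (q:ℂ)*I‖ - 1) *
        (‖(p:ℂ) + (q:ℂ)*I‖ + 1) = 0 by linear_combination hsq) with h | h
    · linarith
    · linarith
  have habsC' : ‖(p:ℂ) - (q:ℂ)*I‖ = 1 := by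
    have hcc : ((p:ℂ) - (q:ℂ)*I) = (starRingEnd ℂ) ((p:ℂ) + (q:ℂ)*I) := by
      simp only [map_sub, map_add, map_mul, map_one, Complex.conj_ofReal, Complex.conj_I]; ring
    rw [hcc, Complex.norm_conj]; exact habsC
  rcases le_or_gt 0 l.im with hb | hb
  · refine ⟨-Real.arccos r, ?_⟩
    have hz : Complex.exp (Complex.I * ((-Real.arccos r : ℝ) : ℂ)) = (r:ℂ) - (s:ℂ)*I := by
      rw [mul_comm, Complex.exp_mul_I, ← Complex.ofReal_cos, ← Complex.ofReal_sin,
        Real.cos_neg, Real.sin_neg, Real.cos_arccos (by linarith) (by linarith),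
        Real.sin_arccos]
      rw [← hs_def]; push_cast; ring
    rw [my_hconj r _, hz]
    have hx0 : (1 - (r:ℂ) * ((r:ℂ) - (s:ℂ)*I)) ≠ 0 := by
      rw [← hz]; exact my_wne r hr0 hr1 _
    have hwne : (starRingEnd ℂ) (1 - (r:ℂ) * ((r:ℂ) - (s:ℂ)*I)) ≠ 0 :=
      fun h => hx0 ((starRingEnd ℂ).injective (by rw [h, map_zero]))
    have hfrac : (1 - (r:ℂ) * ((r:ℂ) - (s:ℂ)*I)) /
        (starRingEnd ℂ) (1 - (r:ℂ) * ((r:ℂ) - (s:ℂ)*I)) = (p:ℂ) + (q:ℂ)*I := by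
      rw [div_eq_iff hwne]
      have hconjw : (starRingEnd ℂ) (1 - (r:ℂ) * ((r:ℂ) - (s:ℂ)*I))
          = 1 - (r:ℂ) * ((r:ℂ) + (s:ℂ)*I) := by
        simp only [map_sub, map_add, map_mul, map_one, Complex.conj_ofReal, Complex.conj_I]; ring
      rw [hconjw, hp_def, hq_def]
      push_cast
      linear_combination (-2*(r:ℂ)^2) * hs2c + (2*(r:ℂ)^2*(s:ℂ)^2) * Complex.I_sq
    rw [hfrac, hcexpr]
    have hl' : ((l.re : ℂ) + Complex.I * ((|l.im| : ℝ) : ℂ)) = l := by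
      rw [_root_.abs_of_nonneg hb]
      rw [mul_comm]
      exact Complex.re_add_im l
    rw [hl']
    have hfactor : 1 - l * ((p:ℂ) + (q:ℂ)*I) = ((p:ℂ) + (q:ℂ)*I) * (((p:ℂ) - (q:ℂ)*I) - l) := by
      linear_combination (-1:ℂ) * hpqc + ((q:ℂ)^2) * Complex.I_sq
    rw [hfactor, norm_mul, habsC, one_mul]
  · refine ⟨Real.arccos r, ?_⟩
    have hz : Complex.exp (Complex.I * ((Real.arccos r : ℝ) : ℂ)) = (r:ℂ) + (s:ℂ)*I := by
      rw [mul_comm, Complex.exp_mul_I, ← Complex.ofReal_cos, ← Complex.ofReal_sin,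
        Real.cos_arccos (by linarith) (by linarith), Real.sin_arccos]
    rw [my_hconj r _, hz]
    have hx0 : (1 - (r:ℂ) * ((r:ℂ) + (s:ℂ)*I)) ≠ 0 := by
      rw [← hz]; exact my_wne r hr0 hr1 _
    have hwne : (starRingEnd ℂ) (1 - (r:ℂ) * ((r:ℂ) + (s:ℂ)*I)) ≠ 0 :=
      fun h => hx0 ((starRingEnd ℂ).injective (by rw [h, map_zero]))
    have hfrac : (1 - (r:ℂ) * ((r:ℂ) + (s:ℂ)*I)) /
        (starRingEnd ℂ) (1 - (r:ℂ) * ((r:ℂ) + (s:ℂ)*I)) = (p:ℂ) - (q:ℂ)*I := by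
      rw [div_eq_iff hwne]
      have hconjw : (starRingEnd ℂ) (1 - (r:ℂ) * ((r:ℂ) + (s:ℂ)*I))
          = 1 - (r:ℂ) * ((r:ℂ) - (s:ℂ)*I) := by
        simp only [map_sub, map_add, map_mul, map_one, Complex.conj_ofReal, Complex.conj_I]; ring
      rw [hconjw, hp_def, hq_def]
      push_cast
      linear_combination (-2*(r:ℂ)^2) * hs2c + (2*(r:ℂ)^2*(s:ℂ)^2) * Complex.I_sq
    rw [hfrac, hcexpr]
    have hl' : ((l.re : ℂ) + Complex.I * ((|l.im| : ℝ) : ℂ)) = (starRingEnd ℂ) l := by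
      rw [_root_.abs_of_neg hb]
      apply Complex.ext <;> simp
    rw [hl']
    have hfactor : 1 - l * ((p:ℂ) - (q:ℂ)*I) = ((p:ℂ) - (q:ℂ)*I) * (((p:ℂ) + (q:ℂ)*I) - l) := by
      linear_combination (-1:ℂ) * hpqc + ((q:ℂ)^2) * Complex.I_sq
    rw [hfactor, norm_mul, habsC', one_mul]
    rw [← Complex.norm_conj (((p:ℂ) + (q:ℂ)*I) - l)]
    congr 1
    simp only [map_sub, map_add, map_mul, Complex.conj_ofReal, Complex.conj_I]
    ring

theorem sup_formula_of_far (r : ℝ) (hr0 : 0 ≤ r) (hr1 : r < 1)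
    (l : ℂ) (hl : ‖l‖ = 1) (hcond : ‖l + 1‖ > 2 * r) :
    (⨆ θ : ℝ, ‖1 - l * ((1 - (r : ℂ) * Complex.exp (Complex.I * θ))
            / (1 - (r : ℂ) * Complex.exp (-(Complex.I * θ))))‖)
      = ‖(1 - 2 * (r : ℂ) ^ 2 - 2 * Complex.I * (r : ℂ) * (Real.sqrt (1 - r ^ 2) : ℂ))
            - ((l.re : ℂ) + Complex.I * ((|l.im| : ℝ) : ℂ))‖ := by
  have hb := fun θ => my_bound_aux r hr0 hr1 l hl hcond θ
  obtain ⟨θ₀, hθ₀⟩ := my_ach_aux r hr0 hr1 l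
  refine le_antisymm (ciSup_le hb) ?_
  rw [← hθ₀]
  exact le_ciSup ⟨_, by rintro x ⟨θ, rfl⟩; exact hb θ⟩ θ₀
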